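/- For any graph G and any non-negative integer s, the graphs (S_{2s+1}(G))^{2s+1} and G are homomorphically equivalent, i.e., each admits a homomorphism to the other. -/

import Mathlib

structure UGraph where
  V : Type
  Adj : V → V → Prop
  symm : ∀ u v, Adj u v → Adj v u

namespace UGraph

/-- There is a walk of length exactly `n` from `u` to `v`. -/
def walkLen (G : UGraph) : ℕ → G.V → G.V → Prop
  | 0, u, v => u = v
  | n+1, u, v => ∃ w, G.Adj u w ∧ G.walkLen n w v

theorem walkLen_concat (G : UGraph) : ∀ (n : ℕ) (u v w : G.V),
    G.walkLen n u v → G.Adj v w → G.walkLen (n+1) u w := by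
  intro n
  induction n with
  | zero =>
      intro u v w h hadj
      cases h
      exact ⟨w, hadj, rfl⟩
  | succ n ih =>
      rintro u v w ⟨x, hux, hxv⟩ hadj
      exact ⟨x, hux, ih x v w hxv hadj⟩

theorem walkLen_symm (G : UGraph) : ∀ (n : ℕ) (u v : G.V),
    G.walkLen n u v → G.walkLen n v u := by
  intro n
  induction n with
  | zero => intro u v h; exact h.symm
  | succ n ih =>
      rintro u v ⟨w, huw, hwv⟩
      exact G.walkLen_concat n v w u (ih w v hwv) (G.symm u w huw)

/-- The `k`-th power of a graph: same vertices, adjacency = existence of a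
walk of length exactly `k` (loops allowed). -/
def pow (G : UGraph) (k : ℕ) : UGraph where
  V := G.V
  Adj u v := G.walkLen k u v
  symm := G.walkLen_symm k

/-- Existence of a graph homomorphism. -/
def homTo (G H : UGraph) : Prop :=
  ∃ f : G.V → H.V, ∀ u v, G.Adj u v → H.Adj (f u) (f v)

/-- The `(2s+1)`-subdivision `S_{2s+1}(G)`: every edge is replaced by a path
of length `2s+1`.  Following the paper's notation, the ordered pair `(u,v)`
(with `u ~ v`) carries the `s` inner vertices `(uv)_1, …, (uv)_s`. -/
def subdiv (G : UGraph) (s : ℕ) : UGraph where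
  V := G.V ⊕ ({p : G.V × G.V // G.Adj p.1 p.2} × Fin s)
  Adj x y :=
    match x, y with
    | Sum.inl u, Sum.inl v => s = 0 ∧ G.Adj u v
    | Sum.inl u, Sum.inr (e, k) => u = e.1.2 ∧ (k : ℕ) = s - 1
    | Sum.inr (e, k), Sum.inl u => u = e.1.2 ∧ (k : ℕ) = s - 1
    | Sum.inr (e, k), Sum.inr (e', l) =>
        e'.1.1 = e.1.2 ∧ e'.1.2 = e.1.1 ∧
        ((k : ℕ) + (l : ℕ) + 2 = s ∨ (k : ℕ) + (l : ℕ) + 2 = s + 1)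
  symm := by
    rintro (u | ⟨e, k⟩) (v | ⟨e', l⟩) h
    · exact ⟨h.1, G.symm _ _ h.2⟩
    · exact h
    · exact h
    · obtain ⟨h1, h2, h3⟩ := h
      exact ⟨h2.symm, h1.symm, by omega⟩

/-- `q < og(G)`: the rational `q` is smaller than the odd girth of `G`
(the length of a shortest odd closed walk; vacuously true if `G` is bipartite). -/
def ltOddGirth (G : UGraph) (q : ℚ) : Prop :=
  ∀ n : ℕ, Odd n → (∃ v, G.walkLen n v v) → q < (n : ℚ)

/-- A graph is non-bipartite iff it contains an odd closed walk. -/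
def Nonbipartite (G : UGraph) : Prop :=
  ∃ (n : ℕ) (v : G.V), Odd n ∧ G.walkLen n v v

/-- The odd girth, as an extended natural number (`⊤` for bipartite graphs). -/
noncomputable def oddGirth (G : UGraph) : ℕ∞ :=
  sInf {N : ℕ∞ | ∃ n : ℕ, N = (n : ℕ∞) ∧ Odd n ∧ ∃ v, G.walkLen n v v}

/-- The complete graph on `m` vertices. -/
def completeGraph (m : ℕ) : UGraph :=
  ⟨Fin m, fun u v => u ≠ v, fun _ _ h => h.symm⟩

/-- The chromatic number: least `m` such that `G` maps homomorphically to `K_m`. -/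
noncomputable def chromatic (G : UGraph) : ℕ :=
  sInf {m : ℕ | G.homTo (completeGraph m)}

/-- The `i`-th power thickness
`θ_i(G) = sup { (2r+1)/(2s+1) | χ(G^{(2r+1)/(2s+1)}) ≤ χ(G)+i, (2r+1)/(2s+1) < og(G) }`. -/
noncomputable def powerThickness (G : UGraph) (i : ℤ) : ℝ :=
  sSup {x : ℝ | ∃ r s : ℕ, x = (2*(r:ℝ)+1)/(2*(s:ℝ)+1) ∧
    ((((G.subdiv s).pow (2*r+1)).chromatic : ℤ) ≤ (G.chromatic : ℤ) + i) ∧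
    G.ltOddGirth ((2*(r:ℚ)+1)/(2*(s:ℚ)+1))}

/-- The graph `H^{-1/(2r+1)}`. -/
def negPow (H : UGraph) (r : ℕ) : UGraph where
  V := {A : Fin (r+1) → Set H.V //
        (∃ v, A 0 = {v}) ∧
        ∀ i : Fin (r+1), (A i).Nonempty ∧ A i ⊆ {u | ∃ v ∈ A 0, H.walkLen i v u}}
  Adj A B :=
    (∀ i j : Fin (r+1), (j : ℕ) = (i : ℕ) + 1 → A.1 i ⊆ B.1 j ∧ B.1 i ⊆ A.1 j) ∧
    ∀ j : Fin (r+1), ∀ a ∈ A.1 j, ∀ b ∈ B.1 j, H.Adj a b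
  symm := by
    rintro A B ⟨h1, h2⟩
    exact ⟨fun i j hij => ⟨(h1 i j hij).2, (h1 i j hij).1⟩,
           fun j b hb a ha => H.symm _ _ (h2 j a ha b hb)⟩

/-- The circular complete graph `K_{n/d}`. -/
def circGraph (n d : ℕ) : UGraph where
  V := Fin n
  Adj u v := (d : ℤ) ≤ |(u : ℤ) - (v : ℤ)| ∧ |(u : ℤ) - (v : ℤ)| ≤ (n : ℤ) - d
  symm := by
    intro u v h
    rwa [abs_sub_comm]

/-- The circular chromatic number, as a real number. -/
noncomputable def circChrom (G : UGraph) : ℝ :=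
  sInf {x : ℝ | ∃ n d : ℕ, 0 < d ∧ 2 * d ≤ n ∧ Nat.gcd n d = 1 ∧
    x = (n : ℝ) / (d : ℝ) ∧ G.homTo (circGraph n d)}

/-- The cycle on `m` vertices. -/
def cycleGraph (m : ℕ) : UGraph :=
  ⟨ZMod m, fun i j => i = j + 1 ∨ j = i + 1, fun _ _ h => h.symm⟩

/-- UGraph isomorphism. -/
def Isom (G H : UGraph) : Prop :=
  ∃ f : G.V ≃ H.V, ∀ u v, G.Adj u v ↔ H.Adj (f u) (f v)

/-- The helical graph `H(m,n,k)`. -/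
def helical (m n k : ℕ) : UGraph where
  V := {A : Fin k → Set (Fin m) //
        (∀ h : 0 < k, (A ⟨0, h⟩).ncard = n) ∧
        (∀ i, n ≤ (A i).ncard) ∧
        (∀ i : Fin k, ∀ h : (i : ℕ) + 1 < k, A i ∩ A ⟨(i : ℕ) + 1, h⟩ = ∅) ∧
        (∀ i : Fin k, ∀ h : (i : ℕ) + 2 < k, A i ⊆ A ⟨(i : ℕ) + 2, h⟩)}
  Adj A B :=
    (∀ i, A.1 i ∩ B.1 i = ∅) ∧
    (∀ i : Fin k, ∀ h : (i : ℕ) + 1 < k,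
      A.1 i ⊆ B.1 ⟨(i : ℕ) + 1, h⟩ ∧ B.1 i ⊆ A.1 ⟨(i : ℕ) + 1, h⟩)
  symm := by
    rintro A B ⟨h1, h2⟩
    refine ⟨fun i => ?_, fun i h => ⟨(h2 i h).2, (h2 i h).1⟩⟩
    rw [Set.inter_comm]
    exact h1 i

/-- A graph with chromatic number `k` is colorful if every proper `k`-coloring
admits a (nonempty) induced subgraph all of whose vertices see all `k` colors in
their closed neighborhood. -/
def Colorful (G : UGraph) : Prop :=
  ∀ c : G.V → Fin G.chromatic, (∀ u v, G.Adj u v → c u ≠ c v) →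
    ∃ S : Set G.V, S.Nonempty ∧
      ∀ v ∈ S, ∀ col : Fin G.chromatic,
        ∃ u ∈ S, (u = v ∨ G.Adj v u) ∧ c u = col

end UGraph

namespace SubdivAux

open UGraph

lemma walkLen_succ_iff (G : UGraph) (n : ℕ) (u v : G.V) :
    G.walkLen (n+1) u v ↔ ∃ w, G.Adj u w ∧ G.walkLen n w v := Iff.rfl

variable (G : UGraph) (s : ℕ)

def phi : (G.subdiv s).V → G.V
  | Sum.inl u => u
  | Sum.inr (e, _) => e.1.1

def anch (z : (G.subdiv s).V) (a : G.V) (j : ℕ) : Prop :=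
  (z = Sum.inl a ∧ j = 0) ∨
  (∃ e k, z = Sum.inr (e, k) ∧
    ((a = e.1.1 ∧ j = 2*(k:ℕ)+2) ∨ (a = e.1.2 ∧ j = 2*s-1-2*(k:ℕ))))

def onEdge (z : (G.subdiv s).V) (u v : G.V) (q : ℕ) : Prop :=
  ∃ e k, z = Sum.inr (e, k) ∧
    ((e.1 = (u,v) ∧ q = 2*(k:ℕ)+2) ∨ (e.1 = (v,u) ∧ q = 2*s-1-2*(k:ℕ)))

def Cw (n : ℕ) (x y : (G.subdiv s).V) : Prop :=
  (∃ a b j l L, anch G s x a j ∧ anch G s y b l ∧ G.walkLen L a b ∧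
     j + l + (2*s+1)*L ≤ n ∧ (n + j + l + (2*s+1)*L) % 2 = 0) ∨
  (∃ u v p q, onEdge G s x u v p ∧ onEdge G s y u v q ∧
     q - p ≤ n ∧ p - q ≤ n ∧ (n + p + q) % 2 = 0)

variable {G s}

lemma onEdge_anch1 {z u v q} (h : onEdge G s z u v q) : anch G s z u q := by
  obtain ⟨e, k, rfl, ⟨hE, rfl⟩ | ⟨hE, rfl⟩⟩ := h
  · exact Or.inr ⟨e, k, rfl, Or.inl ⟨by rw [hE], rfl⟩⟩
  · exact Or.inr ⟨e, k, rfl, Or.inr ⟨by rw [hE], rfl⟩⟩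

lemma onEdge_anch2 {z u v q} (h : onEdge G s z u v q) : anch G s z v (2*s+1-q) := by
  obtain ⟨e, k, rfl, ⟨hE, rfl⟩ | ⟨hE, rfl⟩⟩ := h
  · exact Or.inr ⟨e, k, rfl, Or.inr ⟨by rw [hE], by have := k.isLt; omega⟩⟩
  · exact Or.inr ⟨e, k, rfl, Or.inl ⟨by rw [hE], by have := k.isLt; omega⟩⟩

lemma onEdge_bounds {z u v q} (h : onEdge G s z u v q) : 1 ≤ q ∧ q ≤ 2*s := by
  obtain ⟨e, k, rfl, ⟨hE, rfl⟩ | ⟨hE, rfl⟩⟩ := h <;> · have := k.isLt; omega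

lemma onEdge_adj {z u v q} (h : onEdge G s z u v q) : G.Adj u v := by
  obtain ⟨e, k, rfl, ⟨hE, rfl⟩ | ⟨hE, rfl⟩⟩ := h
  · have h2 := e.2; rw [hE] at h2; exact h2
  · have h2 := e.2; rw [hE] at h2; exact G.symm _ _ h2

lemma onEdge_phi {z u v q} (h : onEdge G s z u v q) :
    (q % 2 = 0 ∧ phi G s z = u) ∨ (q % 2 = 1 ∧ phi G s z = v) := by
  obtain ⟨e, k, rfl, ⟨hE, rfl⟩ | ⟨hE, rfl⟩⟩ := h
  · exact Or.inl ⟨by omega, by simp [phi, hE]⟩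
  · exact Or.inr ⟨by have := k.isLt; omega, by simp [phi, hE]⟩

lemma anch_phi {z a j} (h : anch G s z a j) :
    (j % 2 = 0 ∧ phi G s z = a) ∨ (j % 2 = 1 ∧ G.Adj (phi G s z) a) := by
  obtain ⟨rfl, rfl⟩ | ⟨e, k, rfl, ⟨rfl, rfl⟩ | ⟨rfl, rfl⟩⟩ := h
  · exact Or.inl ⟨rfl, rfl⟩
  · exact Or.inl ⟨by omega, rfl⟩
  · exact Or.inr ⟨by have := k.isLt; omega, e.2⟩

lemma walk_to_C : ∀ (n : ℕ) (x y : (G.subdiv s).V),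
    (G.subdiv s).walkLen n x y → Cw G s n x y := by
  intro n
  induction n with
  | zero =>
    intro x y h
    have hxy : x = y := h
    subst hxy
    rcases x with u | ⟨e, k⟩
    · exact Or.inl ⟨u, u, 0, 0, 0, Or.inl ⟨rfl, rfl⟩, Or.inl ⟨rfl, rfl⟩, rfl,
        by omega, by omega⟩
    · refine Or.inr ⟨e.1.1, e.1.2, 2*(k:ℕ)+2, 2*(k:ℕ)+2,
        ⟨e, k, rfl, Or.inl ⟨rfl, rfl⟩⟩, ⟨e, k, rfl, Or.inl ⟨rfl, rfl⟩⟩,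
        by omega, by omega, by omega⟩
  | succ n ih =>
    intro x y h
    rw [walkLen_succ_iff] at h
    obtain ⟨x1, hadj, hw⟩ := h
    have hC := ih x1 y hw
    rcases x with u | ⟨e, k⟩ <;> rcases x1 with w | ⟨e', k'⟩
    · -- inl u ~ inl w
      obtain ⟨hs0, huw⟩ := hadj
      rcases hC with ⟨a, b, j, l, L, ha, hb, hwalk, hle, hpar⟩ |
        ⟨u', v', p, q, hx1, hy, h1, h2, h3⟩
      · rcases ha with ⟨heq, rfl⟩ | ⟨e2, k2, heq, _⟩
        · injection heq with heq; subst heq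
          have hmul : (2*s+1)*(L+1) = (2*s+1)*L + (2*s+1) := by ring
          exact Or.inl ⟨u, b, 0, l, L+1, Or.inl ⟨rfl, rfl⟩, hb,
            ⟨_, huw, hwalk⟩, by omega, by omega⟩
        · simp at heq
      · obtain ⟨e2, k2, heq, _⟩ := hx1; simp at heq
    · -- inl u ~ inr (e', k')
      obtain ⟨hu, hk⟩ := hadj
      have hks := k'.isLt
      rcases hC with ⟨a, b, j, l, L, ha, hb, hwalk, hle, hpar⟩ |
        ⟨u', v', p, q, hx1, hy, h1, h2, h3⟩
      · rcases ha with ⟨heq, _⟩ | ⟨e2, k2, heq, hform⟩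
        · simp at heq
        · injection heq with heq
          injection heq with hA hB
          subst hA; subst hB
          rcases hform with ⟨rfl, hj⟩ | ⟨rfl, hj⟩
          · have hmul : (2*s+1)*(L+1) = (2*s+1)*L + (2*s+1) := by ring
            refine Or.inl ⟨u, b, 0, l, L+1, Or.inl ⟨rfl, rfl⟩, hb,
              ⟨e'.1.1, ?_, hwalk⟩, by omega, by omega⟩
            rw [hu]; exact G.symm _ _ e'.2
          · refine Or.inl ⟨u, b, 0, l, L, Or.inl ⟨rfl, rfl⟩, hb, ?_,
              by omega, by omega⟩
            rw [hu]; exact hwalk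
      · obtain ⟨e2, k2, heq, hform⟩ := hx1
        injection heq with heq
        injection heq with hA hB
        subst hA; subst hB
        have hqb := onEdge_bounds hy
        rcases hform with ⟨hE, hp⟩ | ⟨hE, hp⟩
        · -- e'.1 = (u',v'), p = 2k'+2 = 2s, u = v'
          have huv : u = v' := by rw [hu, hE]
          refine Or.inl ⟨u, u, 0, 2*s+1-q, 0, Or.inl ⟨rfl, rfl⟩, ?_, rfl,
            by omega, by omega⟩
          rw [huv]; exact onEdge_anch2 hy
        · -- e'.1 = (v',u'), p = 2s-1-2k' = 1, u = u'
          have huv : u = u' := by rw [hu, hE]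
          refine Or.inl ⟨u, u, 0, q, 0, Or.inl ⟨rfl, rfl⟩, ?_, rfl,
            by omega, by omega⟩
          rw [huv]; exact onEdge_anch1 hy
    · -- inr (e,k) ~ inl w
      obtain ⟨hw', hk⟩ := hadj
      subst hw'
      have hks := k.isLt
      rcases hC with ⟨a, b, j, l, L, ha, hb, hwalk, hle, hpar⟩ |
        ⟨u', v', p, q, hx1, hy, h1, h2, h3⟩
      · rcases ha with ⟨heq, rfl⟩ | ⟨e2, k2, heq, _⟩
        · injection heq with heq; subst heq
          exact Or.inl ⟨e.1.2, b, 2*s-1-2*(k:ℕ), l, L,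
            Or.inr ⟨e, k, rfl, Or.inr ⟨rfl, rfl⟩⟩, hb, hwalk,
            by omega, by omega⟩
        · simp at heq
      · obtain ⟨e2, k2, heq, _⟩ := hx1; simp at heq
    · -- inr (e,k) ~ inr (e',k')
      obtain ⟨hee1, hee2, hkk⟩ := hadj
      have hks := k.isLt
      have hks' := k'.isLt
      rcases hC with ⟨a, b, j, l, L, ha, hb, hwalk, hle, hpar⟩ |
        ⟨u', v', p, q, hx1, hy, h1, h2, h3⟩
      · rcases ha with ⟨heq, _⟩ | ⟨e2, k2, heq, hform⟩
        · simp at heq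
        · injection heq with heq
          injection heq with hA hB
          subst hA; subst hB
          rcases hform with ⟨rfl, hj⟩ | ⟨rfl, hj⟩
          · exact Or.inl ⟨e'.1.1, b, 2*s-1-2*(k:ℕ), l, L,
              Or.inr ⟨e, k, rfl, Or.inr ⟨hee1, rfl⟩⟩, hb, hwalk,
              by omega, by omega⟩
          · exact Or.inl ⟨e'.1.2, b, 2*(k:ℕ)+2, l, L,
              Or.inr ⟨e, k, rfl, Or.inl ⟨hee2, rfl⟩⟩, hb, hwalk,
              by omega, by omega⟩
      · obtain ⟨e2, k2, heq, hform⟩ := hx1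
        injection heq with heq
        injection heq with hA hB
        subst hA; subst hB
        rcases hform with ⟨hE, hp⟩ | ⟨hE, hp⟩
        · have hE2 : e.1 = (v', u') := by
            have g1 : e.1.1 = v' := by rw [← hee2, hE]
            have g2 : e.1.2 = u' := by rw [← hee1, hE]
            rw [Prod.ext_iff]; exact ⟨g1, g2⟩
          exact Or.inr ⟨u', v', 2*s-1-2*(k:ℕ), q,
            ⟨e, k, rfl, Or.inr ⟨hE2, rfl⟩⟩, hy, by omega, by omega, by omega⟩
        · have hE2 : e.1 = (u', v') := by
            have g1 : e.1.1 = u' := by rw [← hee2, hE]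
            have g2 : e.1.2 = v' := by rw [← hee1, hE]
            rw [Prod.ext_iff]; exact ⟨g1, g2⟩
          exact Or.inr ⟨u', v', 2*(k:ℕ)+2, q,
            ⟨e, k, rfl, Or.inl ⟨hE2, rfl⟩⟩, hy, by omega, by omega, by omega⟩

lemma extract (x y : (G.subdiv s).V) (h : Cw G s (2*s+1) x y) :
    G.Adj (phi G s x) (phi G s y) := by
  rcases h with ⟨a, b, j, l, L, ha, hb, hwalk, hle, hpar⟩ |
    ⟨u, v, p, q, hx, hy, h1, h2, h3⟩
  · have hL : L = 0 ∨ L = 1 := by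
      rcases Nat.lt_or_ge L 2 with h' | h'
      · omega
      · exfalso
        have := Nat.mul_le_mul_left (2*s+1) h'
        omega
    rcases anch_phi ha with ⟨hj, hpx⟩ | ⟨hj, hpx⟩ <;>
      rcases anch_phi hb with ⟨hl, hpy⟩ | ⟨hl, hpy⟩ <;>
      rcases hL with rfl | rfl
    · omega
    · -- both even, L = 1
      have hj0 : j = 0 ∧ l = 0 := by omega
      rw [walkLen_succ_iff] at hwalk
      obtain ⟨w, hab, hwb⟩ := hwalk
      have : w = b := hwb
      subst this
      rw [hpx, hpy]; exact hab
    · -- j even, l odd, L = 0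
      have hab : a = b := hwalk
      rw [hpx]
      exact G.symm _ _ (by rw [← hab] at hpy; exact hpy)
    · omega
    · -- j odd, l even, L = 0
      have hab : a = b := hwalk
      rw [hpy]
      rw [hab] at hpx; exact hpx
    · omega
    · omega
    · omega
  · rcases onEdge_phi hx with ⟨hp, hpx⟩ | ⟨hp, hpx⟩ <;>
      rcases onEdge_phi hy with ⟨hq, hpy⟩ | ⟨hq, hpy⟩
    · omega
    · rw [hpx, hpy]; exact onEdge_adj hx
    · rw [hpx, hpy]; exact G.symm _ _ (onEdge_adj hx)
    · omega

lemma walkA (G : UGraph) (j : ℕ) (u v : G.V) (h : G.Adj u v) :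
    ∀ (k : ℕ) (hk : k < j+1), (G.subdiv (j+1)).walkLen (2*k+2)
      (Sum.inr (⟨(v,u), G.symm u v h⟩, ⟨k, hk⟩)) (Sum.inl v) := by
  intro k
  induction k with
  | zero =>
    intro hk
    exact ⟨Sum.inr (⟨(u,v), h⟩, ⟨j, by omega⟩),
      ⟨rfl, rfl, Or.inr (by show 0 + j + 2 = (j+1)+1; omega)⟩,
      Sum.inl v, ⟨rfl, rfl⟩, rfl⟩
  | succ k ihk =>
    intro hk
    have hk' : k < j := by omega
    refine ⟨Sum.inr (⟨(u,v), h⟩, ⟨j - 1 - k, by omega⟩),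
      ⟨rfl, rfl, Or.inr ?_⟩,
      Sum.inr (⟨(v,u), G.symm u v h⟩, ⟨k, by omega⟩),
      ⟨rfl, rfl, Or.inl ?_⟩, ihk (by omega)⟩
    · show (k+1) + (j-1-k) + 2 = (j+1)+1
      omega
    · show (j-1-k) + k + 2 = (j+1)
      omega

end SubdivAux


open UGraph
/-- `(S_{2s+1}(G))^{2s+1}` and `G` are homomorphically equivalent. -/
theorem subdiv_pow_hom_equiv (G : UGraph) (s : ℕ) :
    ((G.subdiv s).pow (2 * s + 1)).homTo G ∧ G.homTo ((G.subdiv s).pow (2 * s + 1)) := by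
  constructor
  · exact ⟨SubdivAux.phi G s, fun x y h =>
      SubdivAux.extract x y (SubdivAux.walk_to_C (2*s+1) x y h)⟩
  · rcases s with _ | j
    · exact ⟨Sum.inl, fun u v h => ⟨Sum.inl v, ⟨rfl, h⟩, rfl⟩⟩
    · refine ⟨Sum.inl, fun u v h => ?_⟩
      exact ⟨Sum.inr (⟨(v,u), G.symm u v h⟩, ⟨j, by omega⟩), ⟨rfl, rfl⟩,
        SubdivAux.walkA G j u v h j (by omega)⟩
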